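/- The Petersen graph is isomorphic to the generalized Petersen graph G(5,2), and G(5,2) satisfies gcd(5,2) = 1 with 2⁴ ≡ 1 (mod 5); consequently the Petersen graph is an induced subgraph of the Cayley graph of the group C₅ ⋊ C₄ of order 20 (with action b ↦ b²) with respect to the minimal generating set {a, b}. -/

import Mathlib

/-- The Cayley graph of a group `Γ` with connection set `S`. -/
def cayley {Γ : Type*} [Group Γ] (S : Set Γ) : SimpleGraph Γ where
  Adj x y := x ≠ y ∧ (x⁻¹ * y ∈ S ∨ y⁻¹ * x ∈ S)
  symm := by
    constructor
    rintro x y ⟨hxy, h⟩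
    exact ⟨hxy.symm, h.symm⟩
  loopless := by constructor; rintro x ⟨hx, -⟩; exact hx rfl

/-- The group homomorphism `AddAut A →* MulAut (Multiplicative A)`. -/
def addAutToMulAut (A : Type*) [AddGroup A] :
    Multiplicative (AddAut A) →* MulAut (Multiplicative A) where
  toFun e := AddEquiv.toMultiplicative (Multiplicative.toAdd e)
  map_one' := rfl
  map_mul' _ _ := rfl

/-- The action of `C_r` on `C_n` sending the generator of `C_r` to multiplication
by `k` on `C_n = ZMod n` (written additively), i.e. to `x ↦ x^k` multiplicatively.
This is well defined since `gcd(k,n) = 1` and `k^r ≡ 1 (mod n)`. -/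
noncomputable def semiAct (n r k : ℕ) (h : Nat.Coprime k n) (hk : k ^ r ≡ 1 [MOD n]) :
    Multiplicative (ZMod r) →* MulAut (Multiplicative (ZMod n)) :=
  AddMonoidHom.toMultiplicativeLeft
    (ZMod.lift r ⟨zmultiplesHom _
      (Additive.ofMul (addAutToMulAut (ZMod n) (AddAut.mulLeft (ZMod.unitOfCoprime k h)))), by
        have hu : (ZMod.unitOfCoprime k h) ^ r = 1 := by
          ext
          push_cast
          have : ((k : ZMod n)) ^ r = ((1 : ℕ) : ZMod n) := by
            rw [← Nat.cast_pow, ZMod.natCast_eq_natCast_iff]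
            exact hk
          simpa using this
        simp only [zmultiplesHom_apply]
        rw [← ofMul_zpow, ← map_zpow, ← map_zpow]
        norm_cast
        rw [hu]
        simp ⟩)

/-- The semidirect product `C_n ⋊ C_r` where the generator `a` of `C_r` acts on the
generator `b` of `C_n` by `a * b * a⁻¹ = b^k`. -/
noncomputable abbrev SDP (n r k : ℕ) (h : Nat.Coprime k n) (hk : k ^ r ≡ 1 [MOD n]) :=
  SemidirectProduct (Multiplicative (ZMod n)) (Multiplicative (ZMod r)) (semiAct n r k h hk)

/-- The generator `a` (of order `r`) of `C_n ⋊ C_r`. -/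
noncomputable def genA (n r k : ℕ) (h : Nat.Coprime k n) (hk : k ^ r ≡ 1 [MOD n]) :
    SDP n r k h hk :=
  SemidirectProduct.inr (Multiplicative.ofAdd 1)

/-- The generator `b` (of order `n`) of `C_n ⋊ C_r`. -/
noncomputable def genB (n r k : ℕ) (h : Nat.Coprime k n) (hk : k ^ r ≡ 1 [MOD n]) :
    SDP n r k h hk :=
  SemidirectProduct.inl (Multiplicative.ofAdd 1)

/-- The generalized Petersen graph `G(n,k)`: vertices `Sum.inl i` are the outer
vertices `uᵢ` and vertices `Sum.inr i` are the inner vertices `vᵢ` (indices mod `n`);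
edges are `uᵢuᵢ₊₁`, `vᵢvᵢ₊ₖ` and the spokes `uᵢvᵢ`. -/
def GPG (n k : ℕ) : SimpleGraph (ZMod n ⊕ ZMod n) where
  Adj x y := x ≠ y ∧
    (match x, y with
     | Sum.inl i, Sum.inl j => j = i + 1 ∨ i = j + 1
     | Sum.inr i, Sum.inr j => j = i + (k : ZMod n) ∨ i = j + (k : ZMod n)
     | Sum.inl i, Sum.inr j => i = j
     | Sum.inr i, Sum.inl j => i = j)
  symm := by
    constructor
    rintro (i | i) (j | j) ⟨hne, h⟩ <;>
      refine ⟨Ne.symm hne, ?_⟩ <;> dsimp only at h ⊢ <;> tauto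
  loopless := by constructor; rintro x ⟨hx, -⟩; exact hx rfl

/-- The map sending the outer vertex `uᵢ` to `bⁱ` and the inner vertex `vᵢ` to `bⁱ * a`
in `C_n ⋊ C_r`. -/
noncomputable def embMap (n r k : ℕ) (h : Nat.Coprime k n) (hk : k ^ r ≡ 1 [MOD n]) :
    ZMod n ⊕ ZMod n → SDP n r k h hk
  | Sum.inl i => genB n r k h hk ^ i.val
  | Sum.inr i => genB n r k h hk ^ i.val * genA n r k h hk

/-- The Petersen graph: vertices are the `2`-element subsets of a `5`-element set, with
disjoint pairs adjacent (the Kneser graph `K(5,2)`). -/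
def petersen : SimpleGraph {t : Finset (Fin 5) // t.card = 2} where
  Adj x y := Disjoint x.1 y.1
  symm := by constructor; rintro x y hxy; exact hxy.symm
  loopless := by
    constructor
    rintro ⟨x, hx⟩ h
    simp only [disjoint_self, Finset.bot_eq_empty] at h
    simp [h] at hx


section Stmt18Aux

def h5' : Nat.Coprime 2 5 := by decide
def hk5' : 2 ^ 4 ≡ 1 [MOD 5] := by decide

noncomputable abbrev G20 := SDP 5 4 2 h5' hk5'
noncomputable abbrev aa : G20 := genA 5 4 2 h5' hk5'
noncomputable abbrev bb : G20 := genB 5 4 2 h5' hk5'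

instance : DecidableEq G20 := fun x y =>
  decidable_of_iff (x.left = y.left ∧ x.right = y.right)
    ⟨fun ⟨h1, h2⟩ => SemidirectProduct.ext h1 h2, fun h => by subst h; exact ⟨rfl, rfl⟩⟩

instance : DecidableRel (GPG 5 2).Adj := fun x y =>
  match x, y with
  | Sum.inl i, Sum.inl j =>
      inferInstanceAs (Decidable (Sum.inl i ≠ Sum.inl j ∧ (j = i + 1 ∨ i = j + 1)))
  | Sum.inr i, Sum.inr j =>
      inferInstanceAs (Decidable
        (Sum.inr i ≠ Sum.inr j ∧ (j = i + (2 : ZMod 5) ∨ i = j + (2 : ZMod 5))))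
  | Sum.inl i, Sum.inr j =>
      inferInstanceAs (Decidable ((Sum.inl i : ZMod 5 ⊕ ZMod 5) ≠ Sum.inr j ∧ i = j))
  | Sum.inr i, Sum.inl j =>
      inferInstanceAs (Decidable ((Sum.inr i : ZMod 5 ⊕ ZMod 5) ≠ Sum.inl j ∧ i = j))

noncomputable instance (x : G20) : Decidable (x ∈ ({aa, bb} : Set G20)) :=
  decidable_of_iff (x = aa ∨ x = bb) (by simp [Set.mem_insert_iff])

/-- Explicit bijection from the vertices of `G(5,2)` to `2`-element subsets of `Fin 5`. -/
def pf : ZMod 5 ⊕ ZMod 5 → {t : Finset (Fin 5) // t.card = 2}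
  | Sum.inl i => ⟨{i, i + 2}, by revert i; decide⟩
  | Sum.inr i => ⟨{i + 3, i + 4}, by revert i; decide⟩

instance : DecidableRel petersen.Adj := fun x y =>
  decidable_of_iff (x.1 ∩ y.1 = ∅) Finset.disjoint_iff_inter_eq_empty.symm

lemma pf_bij : Function.Bijective pf := by decide

lemma pf_adj : ∀ x y, petersen.Adj (pf x) (pf y) ↔ (GPG 5 2).Adj x y := by decide

noncomputable def isoGP : GPG 5 2 ≃g petersen :=
  ⟨Equiv.ofBijective pf pf_bij, fun {a b} => pf_adj a b⟩

noncomputable abbrev emb := embMap 5 4 2 h5' hk5'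

lemma emb_inj : Function.Injective emb := by decide +kernel

lemma emb_adj : ∀ x y, (cayley {aa, bb}).Adj (emb x) (emb y) ↔ (GPG 5 2).Adj x y := by
  unfold cayley
  decide

noncomputable def isoInduce : GPG 5 2 ≃g (cayley {aa, bb}).induce (Set.range emb) :=
  ⟨Equiv.ofInjective emb emb_inj, fun {a b} => emb_adj a b⟩

lemma b_pow (m : Multiplicative (ZMod 5)) :
    (SemidirectProduct.inl m : G20) = bb ^ (Multiplicative.toAdd m).val := by
  revert m; decide +kernel

lemma a_pow (j : Multiplicative (ZMod 4)) :
    (SemidirectProduct.inr j : G20) = aa ^ (Multiplicative.toAdd j).val := by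
  revert j; decide +kernel

lemma card20 : Nat.card G20 = 20 := by
  have e : G20 ≃ Multiplicative (ZMod 5) × Multiplicative (ZMod 4) :=
    ⟨fun g => (g.left, g.right), fun p => ⟨p.1, p.2⟩, fun g => rfl, fun p => rfl⟩
  rw [Nat.card_congr e]
  simp [Nat.card_eq_fintype_card]

lemma closure_top : Subgroup.closure ({aa, bb} : Set G20) = ⊤ := by
  rw [eq_top_iff]
  intro x _
  have ha : aa ∈ Subgroup.closure ({aa, bb} : Set G20) :=
    Subgroup.subset_closure (by simp)
  have hb : bb ∈ Subgroup.closure ({aa, bb} : Set G20) :=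
    Subgroup.subset_closure (by simp)
  rw [← SemidirectProduct.inl_left_mul_inr_right x]
  exact mul_mem (by rw [b_pow]; exact pow_mem hb _) (by rw [a_pow]; exact pow_mem ha _)

lemma closure_a_ne : Subgroup.closure ({aa} : Set G20) ≠ ⊤ := by
  intro h
  have hb : bb ∈ Subgroup.closure ({aa} : Set G20) := h ▸ Subgroup.mem_top bb
  have hle : Subgroup.closure ({aa} : Set G20) ≤ SemidirectProduct.inr.range :=
    (Subgroup.closure_le _).mpr (by rintro x rfl; exact ⟨_, rfl⟩)
  obtain ⟨y, hy⟩ := hle hb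
  have h1 := congrArg SemidirectProduct.left hy
  rw [SemidirectProduct.left_inr] at h1
  exact absurd h1 (by decide)

lemma closure_b_ne : Subgroup.closure ({bb} : Set G20) ≠ ⊤ := by
  intro h
  have ha : aa ∈ Subgroup.closure ({bb} : Set G20) := h ▸ Subgroup.mem_top aa
  have hle : Subgroup.closure ({bb} : Set G20) ≤ SemidirectProduct.inl.range :=
    (Subgroup.closure_le _).mpr (by rintro x rfl; exact ⟨_, rfl⟩)
  obtain ⟨y, hy⟩ := hle ha
  have h1 := congrArg SemidirectProduct.right hy
  rw [SemidirectProduct.right_inl] at h1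
  exact absurd h1 (by decide)

end Stmt18Aux

theorem stmt18 :
    ∃ (h : Nat.Coprime 5 2) (hk : 2 ^ 4 ≡ 1 [MOD 5]),
      Nonempty (petersen ≃g GPG 5 2) ∧
      Nat.card (SDP 5 4 2 h.symm hk) = 20 ∧
      Subgroup.closure {genA 5 4 2 h.symm hk, genB 5 4 2 h.symm hk} = ⊤ ∧
      Subgroup.closure {genA 5 4 2 h.symm hk} ≠ ⊤ ∧
      Subgroup.closure {genB 5 4 2 h.symm hk} ≠ ⊤ ∧
      Nonempty (petersen ≃g
        ((cayley {genA 5 4 2 h.symm hk, genB 5 4 2 h.symm hk}).induce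
          (Set.range (embMap 5 4 2 h.symm hk)))) := by
  refine ⟨h5'.symm, hk5', ⟨isoGP.symm⟩, card20, closure_top, closure_a_ne, closure_b_ne,
    ⟨isoGP.symm.trans isoInduce⟩⟩
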